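/- (Lemma 3.14: reflective equation for the A-type Jackson integral.) With Ī the dual Jackson integral of A-type as in the context, suppose |q·a₁⁻¹b₁⁻¹| < |q^α t^{2i−2}| < 1 for i=1,…,n, and let x∈(ℂ∖{0})ⁿ be such that both I(x) and Ī(x⁻¹) have well-defined summands and converge absolutely, where x⁻¹ := (x₁⁻¹,…,xₙ⁻¹) and the branch values of powers of x_i⁻¹ are taken to be (x_i⁻¹)^c := x_i^{−c}. Then I(x) = (−1)^{n(n−1)/2} · ∏_{i=1}^n x_i^{1−α₁−β₁} · θ(q·a₁⁻¹x_i)/θ(b₁x_i) · ∏_{1≤j<k≤n} x_j^{2τ−1}·x_k^{1−2τ} · θ(q·t⁻¹x_k/x_j)/θ(t·x_k/x_j) · Ī(x⁻¹). -/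

import Mathlib

open scoped BigOperators

/-- `q^c := exp(c · log q)` with the real branch of `log q`. -/
noncomputable def qpow (q : ℝ) (c : ℂ) : ℂ := Complex.exp (c * (Real.log q : ℂ))

/-- `(a)_∞ := ∏_{i=0}^∞ (1 - q^i a)`. -/
noncomputable def poch (q : ℝ) (a : ℂ) : ℂ := ∏' i : ℕ, (1 - (q : ℂ) ^ i * a)

/-- `θ(a) := (a)_∞ (q/a)_∞`. -/
noncomputable def qtheta (q : ℝ) (a : ℂ) : ℂ := poch q a * poch q ((q : ℂ) / a)

/-- The summand `Ψ_x(ν)` of the Jackson integral of A-type; the base point `x` is given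
through branch logarithms `l` (so `x i = exp (l i)` and the branch `x i ^ c = exp (c * l i)`). -/
noncomputable def Apsi (q : ℝ) (n : ℕ) (α τ a₁ b₁ : ℂ) (l : Fin n → ℂ) (ν : Fin n → ℤ) : ℂ :=
  (∏ i : Fin n,
      Complex.exp (α * l i) * qpow q α ^ ν i *
        (poch q ((q : ℂ) * a₁⁻¹ * (Complex.exp (l i) * (q : ℂ) ^ ν i)) /
          poch q (b₁ * (Complex.exp (l i) * (q : ℂ) ^ ν i)))) *
  (∏ i : Fin n, ∏ j ∈ Finset.Ioi i,
      Complex.exp ((2 * τ - 1) * l i) * qpow q (2 * τ - 1) ^ ν i *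
        (poch q (qpow q (1 - τ) *
            (Complex.exp (l j) * (q : ℂ) ^ ν j / (Complex.exp (l i) * (q : ℂ) ^ ν i))) /
          poch q (qpow q τ *
            (Complex.exp (l j) * (q : ℂ) ^ ν j / (Complex.exp (l i) * (q : ℂ) ^ ν i))))) *
  (∏ i : Fin n, ∏ j ∈ Finset.Ioi i,
      (Complex.exp (l i) * (q : ℂ) ^ ν i - Complex.exp (l j) * (q : ℂ) ^ ν j))

/-- The Jackson integral of A-type `I(x) = (1-q)^n Σ_{ν ∈ ℤⁿ} Ψ_x(ν)`. -/
noncomputable def AInt (q : ℝ) (n : ℕ) (α τ a₁ b₁ : ℂ) (l : Fin n → ℂ) : ℂ :=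
  ((1 : ℂ) - (q : ℂ)) ^ n * ∑' ν : Fin n → ℤ, Apsi q n α τ a₁ b₁ l ν

/-- All summands of `I(x)` are well defined: no vanishing denominators. -/
def AWellDef (q : ℝ) (n : ℕ) (τ b₁ : ℂ) (l : Fin n → ℂ) : Prop :=
  ∀ ν : Fin n → ℤ,
    (∀ i : Fin n, poch q (b₁ * (Complex.exp (l i) * (q : ℂ) ^ ν i)) ≠ 0) ∧
    (∀ i j : Fin n, i < j →
      poch q (qpow q τ *
        (Complex.exp (l j) * (q : ℂ) ^ ν j / (Complex.exp (l i) * (q : ℂ) ^ ν i))) ≠ 0)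


section Part1
variable {q : ℝ} (hq0 : 0 < q) (hq1 : q < 1)
include hq0 hq1

lemma norm_q_pow_mul (a : ℂ) (m : ℕ) : ‖(q:ℂ)^m * a‖ = q^m * ‖a‖ := by
  rw [norm_mul, norm_pow, Complex.norm_real, Real.norm_eq_abs, abs_of_pos hq0]

lemma summable_log_poch (a : ℂ) (h : ∀ k : ℕ, (1 : ℂ) - (q:ℂ)^k * a ≠ 0) :
    Summable (fun k : ℕ => Complex.log (1 - (q:ℂ)^k * a)) := by
  rcases eq_or_ne a 0 with rfl | ha
  · simpa using summable_zero
  have ha' : 0 < ‖a‖ := norm_pos_iff.mpr ha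
  obtain ⟨N, hN⟩ : ∃ N : ℕ, q ^ N < (2 * ‖a‖)⁻¹ := by
    apply exists_pow_lt_of_lt_one _ hq1
    exact inv_pos.mpr (by linarith)
  rw [← summable_nat_add_iff N]
  have hb : ∀ k : ℕ, ‖Complex.log (1 - (q:ℂ)^(k+N) * a)‖ ≤
      (3/2) * (‖a‖ * q ^ N) * q ^ k := by
    intro k
    have hval : ‖(q:ℂ)^(k+N) * a‖ = q^(k+N) * ‖a‖ := norm_q_pow_mul hq0 hq1 a _
    have habs : ‖-((q:ℂ)^(k+N) * a)‖ ≤ 1/2 := by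
      rw [norm_neg, hval, pow_add]
      have h1 : q ^ k ≤ 1 := pow_le_one₀ hq0.le hq1.le
      have h2 : q ^ N * ‖a‖ ≤ 1/2 := by
        have h3 := mul_lt_mul_of_pos_right hN ha'
        have h4 : (2 * ‖a‖)⁻¹ * ‖a‖ = 1/2 := by field_simp
        linarith
      nlinarith [pow_pos hq0 k, pow_pos hq0 N]
    have hlog := Complex.norm_log_one_add_half_le_self habs
    rw [show (1:ℂ) + -((q:ℂ)^(k+N)*a) = 1 - (q:ℂ)^(k+N)*a by ring] at hlog
    refine hlog.trans ?_
    rw [norm_neg, hval, pow_add]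
    nlinarith [pow_pos hq0 k, pow_pos hq0 N]
  refine Summable.of_norm_bounded ?_ hb
  exact (summable_geometric_of_lt_one (by positivity) hq1).mul_left _

lemma poch_ne_zero {a : ℂ} (h : ∀ k : ℕ, (q:ℂ)^k * a ≠ 1) : poch q a ≠ 0 := by
  have h' : ∀ k : ℕ, (1 : ℂ) - (q:ℂ)^k * a ≠ 0 := fun k => sub_ne_zero.mpr (fun hh => h k hh.symm)
  have := Complex.cexp_tsum_eq_tprod (f := fun (k : ℕ) => 1 - (q:ℂ)^k * a)
    (fun k => h' k) (summable_log_poch hq0 hq1 a h')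
  rw [poch, ← this]
  exact Complex.exp_ne_zero _

lemma multipliable_poch (a : ℂ) : Multipliable (fun k : ℕ => 1 - (q:ℂ)^k * a) := by
  by_cases h : ∀ k : ℕ, (1 : ℂ) - (q:ℂ)^k * a ≠ 0
  · exact Complex.multipliable_of_summable_log (summable_log_poch hq0 hq1 a h)
  · push_neg at h
    obtain ⟨k, hk⟩ := h
    refine ⟨0, ?_⟩
    have : (fun s : Finset ℕ => ∏ i ∈ s, (1 - (q:ℂ)^i * a)) =ᶠ[Filter.atTop] (fun _ => 0) := by
      refine Filter.eventually_atTop.mpr ⟨{k}, fun s hs => ?_⟩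
      exact Finset.prod_eq_zero (hs (Finset.mem_singleton_self k)) hk
    exact (Filter.tendsto_congr' this).mpr tendsto_const_nhds

lemma poch_split (a : ℂ) (m : ℕ) :
    poch q a = (∏ i ∈ Finset.range m, (1 - (q:ℂ)^i * a)) * poch q ((q:ℂ)^m * a) := by
  have hfun : (fun n : ℕ => 1 - (q:ℂ)^n * ((q:ℂ)^m * a)) = (fun n : ℕ => 1 - (q:ℂ)^(n+m) * a) := by
    funext n; rw [pow_add]; ring
  have hm : Multipliable (fun n : ℕ => 1 - (q:ℂ)^(n+m) * a) := by
    rw [← hfun]; exact multipliable_poch hq0 hq1 _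
  have := Multipliable.prod_mul_tprod_nat_mul' (f := fun n : ℕ => 1 - (q:ℂ)^n * a) (k := m) hm
  rw [poch, poch, ← this, hfun]

lemma poch_eq_zero {a : ℂ} {k : ℕ} (hk : (q:ℂ)^k * a = 1) : poch q a = 0 := by
  rw [poch_split hq0 hq1 a (k+1)]
  have : (1 : ℂ) - (q:ℂ)^k * a = 0 := by rw [hk]; ring
  rw [Finset.prod_eq_zero (Finset.self_mem_range_succ k) this, zero_mul]

lemma poch_step (a : ℂ) : poch q a = (1 - a) * poch q ((q:ℂ) * a) := by
  have := poch_split hq0 hq1 a 1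
  simpa using this

end Part1

section Part2
variable {q : ℝ} (hq0 : 0 < q) (hq1 : q < 1)
include hq0 hq1

lemma qtheta_qmul {a : ℂ} (ha : a ≠ 0) : qtheta q ((q:ℂ) * a) = -a⁻¹ * qtheta q a := by
  have hq : (q:ℂ) ≠ 0 := by exact_mod_cast hq0.ne'
  have h1 : poch q a = (1 - a) * poch q ((q:ℂ) * a) := poch_step hq0 hq1 a
  have h2 : poch q (a⁻¹) = (1 - a⁻¹) * poch q ((q:ℂ) * a⁻¹) := poch_step hq0 hq1 _
  rw [qtheta, qtheta]
  rw [show (q:ℂ) / ((q:ℂ) * a) = a⁻¹ by field_simp]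
  rw [show (q:ℂ) / a = (q:ℂ) * a⁻¹ by field_simp]
  rw [h2, h1]
  have : (1 - a⁻¹) = -a⁻¹ * (1 - a) := by field_simp; ring
  rw [this]; ring

lemma qtheta_zpow_key {u v : ℂ} (hu : u ≠ 0) (hv : v ≠ 0) (ν : ℤ) :
    qtheta q ((q:ℂ)^ν * u) * u^ν * qtheta q v = qtheta q ((q:ℂ)^ν * v) * v^ν * qtheta q u := by
  have hq : (q:ℂ) ≠ 0 := by exact_mod_cast hq0.ne'
  induction ν using Int.induction_on with
  | zero => simp; ring
  | succ k ih =>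
    have hqk : ((q:ℂ)^(k:ℤ)) ≠ 0 := zpow_ne_zero _ hq
    rw [show ((q:ℂ)^((k:ℤ)+1) * u) = (q:ℂ) * ((q:ℂ)^(k:ℤ) * u) by rw [zpow_add_one₀ hq]; ring,
        show ((q:ℂ)^((k:ℤ)+1) * v) = (q:ℂ) * ((q:ℂ)^(k:ℤ) * v) by rw [zpow_add_one₀ hq]; ring,
        qtheta_qmul hq0 hq1 (mul_ne_zero hqk hu),
        qtheta_qmul hq0 hq1 (mul_ne_zero hqk hv),
        zpow_add_one₀ hu, zpow_add_one₀ hv]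
    generalize qtheta q ((q:ℂ)^(k:ℤ) * u) = A at *
    generalize qtheta q ((q:ℂ)^(k:ℤ) * v) = C at *
    generalize qtheta q u = D at *
    generalize qtheta q v = B at *
    generalize hP : ((q:ℂ)^(k:ℤ)) = P at *
    generalize u^(k:ℤ) = U at *
    generalize v^(k:ℤ) = V at *
    have hPne : P ≠ 0 := hP ▸ hqk
    field_simp
    linear_combination -ih
  | pred k ih =>
    have hqk : ((q:ℂ)^(-(k:ℤ)-1)) ≠ 0 := zpow_ne_zero _ hq
    have e1 : ∀ w : ℂ, ((q:ℂ)^(-(k:ℤ)) * w) = (q:ℂ) * ((q:ℂ)^(-(k:ℤ)-1) * w) := by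
      intro w
      rw [show (-(k:ℤ) : ℤ) = (-(k:ℤ)-1) + 1 by ring, zpow_add_one₀ hq]; ring
    rw [e1 u, e1 v] at ih
    rw [qtheta_qmul hq0 hq1 (mul_ne_zero hqk hu), qtheta_qmul hq0 hq1 (mul_ne_zero hqk hv)] at ih
    have e2 : ∀ w : ℂ, w ≠ 0 → w ^ (-(k:ℤ)) = w ^ (-(k:ℤ)-1) * w := by
      intro w hw
      rw [← zpow_add_one₀ hw]; ring_nf
    rw [e2 u hu, e2 v hv] at ih
    generalize qtheta q ((q:ℂ)^(-(k:ℤ)-1) * u) = A at *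
    generalize qtheta q ((q:ℂ)^(-(k:ℤ)-1) * v) = C at *
    generalize qtheta q u = D at *
    generalize qtheta q v = B at *
    generalize hP : ((q:ℂ)^(-(k:ℤ)-1)) = P at *
    generalize u^(-(k:ℤ)-1) = U at *
    generalize v^(-(k:ℤ)-1) = V at *
    have hPne : P ≠ 0 := hP ▸ hqk
    have hne : u * (P * v) ≠ 0 := by
      apply mul_ne_zero hu (mul_ne_zero hPne hv)
    field_simp at ih
    apply mul_right_cancel₀ hne
    linear_combination (-(u * P * v)) * ih

end Part2

section Part3
variable {q : ℝ} (hq0 : 0 < q) (hq1 : q < 1)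

lemma qpow_add (c d : ℂ) : qpow q (c + d) = qpow q c * qpow q d := by
  rw [qpow, qpow, qpow, ← Complex.exp_add, add_mul]

lemma qpow_ne_zero (c : ℂ) : qpow q c ≠ 0 := Complex.exp_ne_zero _

lemma qpow_zero : qpow q 0 = 1 := by simp [qpow]

lemma qpow_neg (c : ℂ) : qpow q (-c) = (qpow q c)⁻¹ := by
  rw [qpow, qpow, ← Complex.exp_neg, neg_mul]

lemma qpow_natmul (m : ℕ) (c : ℂ) : qpow q ((m : ℂ) * c) = qpow q c ^ m := by
  rw [qpow, qpow, mul_assoc, Complex.exp_nat_mul]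

include hq0 in
lemma qpow_one : qpow q 1 = (q : ℂ) := by
  rw [qpow, one_mul, ← Complex.ofReal_exp, Real.exp_log hq0]

include hq0 hq1 in
lemma lemR (a b X : ℂ) (ha : a ≠ 0) (hb : b ≠ 0) (hX : X ≠ 0) (ν : ℤ)
    (hP2 : poch q (b*(X*(q:ℂ)^ν)) ≠ 0)
    (hP4 : poch q (a*(X⁻¹*(q:ℂ)^(-ν))) ≠ 0)
    (hPv1 : poch q (b*X) ≠ 0)
    (hPv2 : poch q ((q:ℂ)*b⁻¹*X⁻¹) ≠ 0) :
    poch q ((q:ℂ)*a⁻¹*(X*(q:ℂ)^ν)) / poch q (b*(X*(q:ℂ)^ν))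
      = (a*b/(q:ℂ))^ν * (qtheta q ((q:ℂ)*a⁻¹*X) / qtheta q (b*X))
        * (poch q ((q:ℂ)*b⁻¹*(X⁻¹*(q:ℂ)^(-ν))) / poch q (a*(X⁻¹*(q:ℂ)^(-ν)))) := by
  have hq : (q:ℂ) ≠ 0 := by exact_mod_cast hq0.ne'
  have hqν : ((q:ℂ)^ν) ≠ 0 := zpow_ne_zero _ hq
  have hu : (q:ℂ)*a⁻¹*X ≠ 0 := by
    apply mul_ne_zero (mul_ne_zero hq (inv_ne_zero ha)) hX
  have hv : b*X ≠ 0 := mul_ne_zero hb hX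
  have key := qtheta_zpow_key hq0 hq1 hu hv ν
  have argu2 : (q:ℂ) / ((q:ℂ)^ν * ((q:ℂ)*a⁻¹*X)) = a*(X⁻¹*(q:ℂ)^(-ν)) := by
    rw [zpow_neg, div_eq_iff (mul_ne_zero hqν hu)]
    field_simp
  have argu1 : (q:ℂ)^ν * ((q:ℂ)*a⁻¹*X) = (q:ℂ)*a⁻¹*(X*(q:ℂ)^ν) := by ring
  have argv2 : (q:ℂ) / ((q:ℂ)^ν * (b*X)) = (q:ℂ)*b⁻¹*(X⁻¹*(q:ℂ)^(-ν)) := by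
    rw [zpow_neg, div_eq_iff (mul_ne_zero hqν hv)]
    field_simp
  have argv1 : (q:ℂ)^ν * (b*X) = b*(X*(q:ℂ)^ν) := by ring
  have eu : qtheta q ((q:ℂ)^ν * ((q:ℂ)*a⁻¹*X))
      = poch q ((q:ℂ)*a⁻¹*(X*(q:ℂ)^ν)) * poch q (a*(X⁻¹*(q:ℂ)^(-ν))) := by
    rw [qtheta, argu2, argu1]
  have ev : qtheta q ((q:ℂ)^ν * (b*X))
      = poch q (b*(X*(q:ℂ)^ν)) * poch q ((q:ℂ)*b⁻¹*(X⁻¹*(q:ℂ)^(-ν))) := by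
    rw [qtheta, argv2, argv1]
  have evv : qtheta q (b*X) = poch q (b*X) * poch q ((q:ℂ)*b⁻¹*X⁻¹) := by
    rw [qtheta]
    rw [show (q:ℂ)/(b*X) = (q:ℂ)*b⁻¹*X⁻¹ by rw [div_eq_iff hv]; field_simp]
  have hzp : (b*X)^ν = (a*b/(q:ℂ))^ν * ((q:ℂ)*a⁻¹*X)^ν := by
    rw [← mul_zpow]
    congr 1
    field_simp
  rw [eu, ev, evv, hzp] at key
  rw [evv]
  have hw : ((a*b/(q:ℂ)):ℂ)^ν ≠ 0 := zpow_ne_zero _ (div_ne_zero (mul_ne_zero ha hb) hq)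
  have hu' : (((q:ℂ)*a⁻¹*X))^ν ≠ 0 := zpow_ne_zero _ hu
  generalize poch q ((q:ℂ)*a⁻¹*(X*(q:ℂ)^ν)) = P1 at *
  generalize hgP2 : poch q (b*(X*(q:ℂ)^ν)) = P2 at *
  generalize poch q ((q:ℂ)*b⁻¹*(X⁻¹*(q:ℂ)^(-ν))) = P3 at *
  generalize hgP4 : poch q (a*(X⁻¹*(q:ℂ)^(-ν))) = P4 at *
  generalize hgV1 : poch q (b*X) = Pv1 at *
  generalize hgV2 : poch q ((q:ℂ)*b⁻¹*X⁻¹) = Pv2 at *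
  generalize qtheta q ((q:ℂ)*a⁻¹*X) = T at *
  generalize hgW : ((a*b/(q:ℂ)):ℂ)^ν = W at *
  generalize hgU : (((q:ℂ)*a⁻¹*X))^ν = U at *
  field_simp
  apply mul_right_cancel₀ hu'
  linear_combination key

end Part3

section Part4
variable {q : ℝ} (hq0 : 0 < q) (hq1 : q < 1)

lemma zpow_pow_comm {y : ℂ} (k : ℤ) (m : ℕ) : (y ^ k) ^ m = (y ^ m) ^ k := by
  rw [← zpow_natCast (y^k) m, ← zpow_natCast y m, ← zpow_mul, ← zpow_mul, mul_comm]

lemma inv_pow_term (c L : ℂ) (k : ℤ) (m : ℕ) :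
    (Complex.exp (c*L) * qpow q c ^ k)⁻¹ ^ m
      = Complex.exp ((-(m:ℂ)*c)*L) * qpow q (-(m:ℂ)*c) ^ k := by
  have h1 : Complex.exp ((-(m:ℂ)*c)*L) = (Complex.exp (c*L))⁻¹ ^ m := by
    rw [← Complex.exp_neg, ← Complex.exp_nat_mul]
    congr 1; ring
  have h2 : qpow q (-(m:ℂ)*c) ^ k = ((qpow q c) ^ k)⁻¹ ^ m := by
    rw [show (-(m:ℂ)*c) = (m:ℂ)*(-c) by ring, qpow_natmul, qpow_neg, ← inv_zpow,
      zpow_pow_comm]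
  rw [h1, h2, mul_inv, mul_pow]

include hq0 in
lemma qpow_sub_one (c d : ℂ) : qpow q c * qpow q d / (q:ℂ) = qpow q (c + d - 1) := by
  rw [show c + d - 1 = c + (d + (-1)) by ring, qpow_add, qpow_add, qpow_neg, qpow_one hq0]
  field_simp

include hq0 hq1 in
/-- Per-index identity for the `A`-part of the summand. -/
lemma Ei (n : ℕ) (hn : 1 ≤ n) (α τ α₁ β₁ L : ℂ) (k : ℤ)
    (hP2 : poch q (qpow q β₁ * (Complex.exp L * (q:ℂ)^k)) ≠ 0)
    (hP4 : poch q (qpow q α₁ * ((Complex.exp L)⁻¹ * (q:ℂ)^(-k))) ≠ 0)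
    (hPv1 : poch q (qpow q β₁ * Complex.exp L) ≠ 0)
    (hPv2 : poch q ((q:ℂ) * (qpow q β₁)⁻¹ * (Complex.exp L)⁻¹) ≠ 0) :
    Complex.exp (α * L) * qpow q α ^ k *
      (poch q ((q:ℂ) * (qpow q α₁)⁻¹ * (Complex.exp L * (q:ℂ)^k)) /
        poch q (qpow q β₁ * (Complex.exp L * (q:ℂ)^k)))
    = (Complex.exp ((1-α₁-β₁) * L) *
        (qtheta q ((q:ℂ) * (qpow q α₁)⁻¹ * Complex.exp L) /
          qtheta q (qpow q β₁ * Complex.exp L)))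
      * ((Complex.exp (2*τ*L) * qpow q (2*τ) ^ k)⁻¹ ^ (n-1))
      * (Complex.exp ((1-α₁-β₁-2*((n:ℂ)-1)*τ-α) * (-L)) *
          qpow q (1-α₁-β₁-2*((n:ℂ)-1)*τ-α) ^ (-k) *
        (poch q ((q:ℂ) * (qpow q β₁)⁻¹ * ((Complex.exp L)⁻¹ * (q:ℂ)^(-k))) /
          poch q (qpow q α₁ * ((Complex.exp L)⁻¹ * (q:ℂ)^(-k))))) := by
  have hX : Complex.exp L ≠ 0 := Complex.exp_ne_zero _
  rw [lemR hq0 hq1 (qpow q α₁) (qpow q β₁) (Complex.exp L) (qpow_ne_zero _) (qpow_ne_zero _)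
      hX k hP2 hP4 hPv1 hPv2]
  set s : ℂ := 1-α₁-β₁-2*((n:ℂ)-1)*τ-α with hs
  have hm : (((n-1 : ℕ)):ℂ) = (n:ℂ) - 1 := by
    push_cast [Nat.cast_sub hn]; ring
  rw [inv_pow_term, hm]
  have e1 : qpow q α₁ * qpow q β₁ / (q:ℂ) = qpow q (α₁ + β₁ - 1) := qpow_sub_one hq0 _ _
  rw [e1]
  have e2 : Complex.exp (s * (-L)) = Complex.exp ((-s) * L) := by congr 1; ring
  have e3 : qpow q s ^ (-k) = qpow q (-s) ^ k := by
    rw [zpow_neg, qpow_neg, inv_zpow]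
  rw [e2, e3]
  have hsc : Complex.exp (α * L) * qpow q α ^ k * qpow q (α₁ + β₁ - 1) ^ k
      = Complex.exp ((1-α₁-β₁) * L)
        * (Complex.exp ((-((n:ℂ)-1)*(2*τ))*L) * qpow q (-((n:ℂ)-1)*(2*τ)) ^ k)
        * (Complex.exp ((-s) * L) * qpow q (-s) ^ k) := by
    rw [mul_assoc, ← mul_zpow, ← qpow_add]
    rw [show α + (α₁ + β₁ - 1) = (-((n:ℂ)-1)*(2*τ)) + (-s) by rw [hs]; ring, qpow_add, mul_zpow]
    have hexp : Complex.exp (α * L)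
        = Complex.exp ((1-α₁-β₁)*L) * Complex.exp ((-((n:ℂ)-1)*(2*τ))*L)
          * Complex.exp ((-s)*L) := by
      rw [← Complex.exp_add, ← Complex.exp_add]
      congr 1; rw [hs]; ring
    rw [hexp]; ring
  linear_combination (qtheta q ((q:ℂ) * (qpow q α₁)⁻¹ * Complex.exp L) /
          qtheta q (qpow q β₁ * Complex.exp L)) *
      (poch q ((q:ℂ) * (qpow q β₁)⁻¹ * ((Complex.exp L)⁻¹ * (q:ℂ)^(-k))) /
          poch q (qpow q α₁ * ((Complex.exp L)⁻¹ * (q:ℂ)^(-k)))) * hsc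

end Part4

section Part5
variable {q : ℝ} (hq0 : 0 < q) (hq1 : q < 1)

include hq0 hq1 in
/-- Per-pair identity for the `B·C`-part of the summand. -/
lemma Eij (τ L1 L2 : ℂ) (k1 k2 : ℤ)
    (hP2 : poch q (qpow q τ * ((Complex.exp L2 * (Complex.exp L1)⁻¹) * (q:ℂ)^(k2-k1))) ≠ 0)
    (hP4 : poch q (qpow q τ * ((Complex.exp L2 * (Complex.exp L1)⁻¹)⁻¹ * (q:ℂ)^(-(k2-k1)))) ≠ 0)
    (hPv1 : poch q (qpow q τ * (Complex.exp L2 * (Complex.exp L1)⁻¹)) ≠ 0)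
    (hPv2 : poch q ((q:ℂ) * (qpow q τ)⁻¹ * (Complex.exp L2 * (Complex.exp L1)⁻¹)⁻¹) ≠ 0) :
    Complex.exp ((2*τ-1) * L1) * qpow q (2*τ-1) ^ k1 *
      (poch q (qpow q (1-τ) * (Complex.exp L2 * (q:ℂ)^k2 / (Complex.exp L1 * (q:ℂ)^k1))) /
        poch q (qpow q τ * (Complex.exp L2 * (q:ℂ)^k2 / (Complex.exp L1 * (q:ℂ)^k1)))) *
      (Complex.exp L1 * (q:ℂ)^k1 - Complex.exp L2 * (q:ℂ)^k2)
    = -((Complex.exp (2*τ*L1) * qpow q (2*τ) ^ k1) * (Complex.exp (2*τ*L2) * qpow q (2*τ) ^ k2))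
      * (Complex.exp ((2*τ-1) * L1) * Complex.exp ((1-2*τ) * L2) *
          (qtheta q ((q:ℂ) * (qpow q τ)⁻¹ * Complex.exp L2 / Complex.exp L1) /
            qtheta q (qpow q τ * Complex.exp L2 / Complex.exp L1)))
      * (Complex.exp ((2*τ-1) * (-L1)) * qpow q (2*τ-1) ^ (-k1) *
          (poch q (qpow q (1-τ) *
              ((Complex.exp L2)⁻¹ * (q:ℂ)^(-k2) / ((Complex.exp L1)⁻¹ * (q:ℂ)^(-k1)))) /
            poch q (qpow q τ *
              ((Complex.exp L2)⁻¹ * (q:ℂ)^(-k2) / ((Complex.exp L1)⁻¹ * (q:ℂ)^(-k1))))))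
      * ((Complex.exp L1)⁻¹ * (q:ℂ)^(-k1) - (Complex.exp L2)⁻¹ * (q:ℂ)^(-k2)) := by
  have hq : (q:ℂ) ≠ 0 := by exact_mod_cast hq0.ne'
  have hX1 : Complex.exp L1 ≠ 0 := Complex.exp_ne_zero _
  have hX2 : Complex.exp L2 ≠ 0 := Complex.exp_ne_zero _
  have hk1 : ((q:ℂ)^k1) ≠ 0 := zpow_ne_zero _ hq
  have hk2 : ((q:ℂ)^k2) ≠ 0 := zpow_ne_zero _ hq
  set X : ℂ := Complex.exp L2 * (Complex.exp L1)⁻¹ with hXdef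
  have hX : X ≠ 0 := mul_ne_zero hX2 (inv_ne_zero hX1)
  have hE1τ : qpow q (1-τ) = (q:ℂ) * (qpow q τ)⁻¹ := by
    rw [show (1-τ:ℂ) = 1 + (-τ) by ring, qpow_add, qpow_one hq0, qpow_neg]
  have earg1 : Complex.exp L2 * (q:ℂ)^k2 / (Complex.exp L1 * (q:ℂ)^k1)
      = X * (q:ℂ)^(k2-k1) := by
    rw [zpow_sub₀ hq, hXdef]; field_simp
  have earg2 : (Complex.exp L2)⁻¹ * (q:ℂ)^(-k2) / ((Complex.exp L1)⁻¹ * (q:ℂ)^(-k1))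
      = X⁻¹ * (q:ℂ)^(-(k2-k1)) := by
    rw [show -(k2-k1) = (-k2) - (-k1) by ring, zpow_sub₀ hq, hXdef, zpow_neg, zpow_neg,
      mul_inv]
    field_simp
  rw [earg1, earg2, hE1τ]
  rw [lemR hq0 hq1 (qpow q τ) (qpow q τ) X (qpow_ne_zero _) (qpow_ne_zero _) hX (k2-k1)
      hP2 hP4 hPv1 hPv2]
  have ethe1 : (q:ℂ) * (qpow q τ)⁻¹ * Complex.exp L2 / Complex.exp L1
      = (q:ℂ) * (qpow q τ)⁻¹ * X := by rw [hXdef]; ring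
  have ethe2 : qpow q τ * Complex.exp L2 / Complex.exp L1 = qpow q τ * X := by
    rw [hXdef]; ring
  rw [ethe1, ethe2]
  have ediff : Complex.exp L1 * (q:ℂ)^k1 - Complex.exp L2 * (q:ℂ)^k2
      = -((Complex.exp L1 * (q:ℂ)^k1) * (Complex.exp L2 * (q:ℂ)^k2))
        * ((Complex.exp L1)⁻¹ * (q:ℂ)^(-k1) - (Complex.exp L2)⁻¹ * (q:ℂ)^(-k2)) := by
    rw [zpow_neg, zpow_neg]; field_simp; ring
  rw [ediff]
  have ebase : qpow q τ * qpow q τ / (q:ℂ) = qpow q (2*τ-1) := by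
    rw [qpow_sub_one hq0]; congr 1; ring
  rw [ebase]
  -- auxiliary scalar facts
  have eq1 : (q:ℂ)^k1 = qpow q 1 ^ k1 := by rw [qpow_one hq0]
  have eq2 : (q:ℂ)^k2 = qpow q 1 ^ k2 := by rw [qpow_one hq0]
  have h2τ1 : qpow q (2*τ-1) * qpow q 1 = qpow q (2*τ) := by
    rw [← qpow_add]; congr 1; ring
  have e2τ1 : qpow q (2*τ-1) ^ k2 * qpow q 1 ^ k2 = qpow q (2*τ) ^ k2 := by
    rw [← mul_zpow, h2τ1]
  have e2τ2 : qpow q (2*τ-1) ^ k1 * qpow q 1 ^ k1 = qpow q (2*τ) ^ k1 := by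
    rw [← mul_zpow, h2τ1]
  have eexp1 : Complex.exp ((2*τ-1) * L1) * Complex.exp L1 = Complex.exp (2*τ*L1) := by
    rw [← Complex.exp_add]; congr 1; ring
  have eexp2 : Complex.exp ((2*τ-1) * L2) * Complex.exp L2 = Complex.exp (2*τ*L2) := by
    rw [← Complex.exp_add]; congr 1; ring
  have eexp3 : Complex.exp ((1-2*τ) * L2) = (Complex.exp ((2*τ-1) * L2))⁻¹ := by
    rw [← Complex.exp_neg]; congr 1; ring
  have emin : Complex.exp ((2*τ-1) * (-L1)) = (Complex.exp ((2*τ-1) * L1))⁻¹ := by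
    rw [← Complex.exp_neg]; congr 1; ring
  have eneg : qpow q (2*τ-1) ^ (-k1) = (qpow q (2*τ-1) ^ k1)⁻¹ := zpow_neg _ _
  have ekk : qpow q (2*τ-1) ^ k1 * qpow q (2*τ-1) ^ (k2-k1) = qpow q (2*τ-1) ^ k2 := by
    rw [← zpow_add₀ (qpow_ne_zero _)]; congr 1; ring
  have hz1 : qpow q (2*τ-1) ^ k1 ≠ 0 := zpow_ne_zero _ (qpow_ne_zero _)
  have hz2 : Complex.exp ((2*τ-1) * L1) ≠ 0 := Complex.exp_ne_zero _
  have hz3 : Complex.exp ((2*τ-1) * L2) ≠ 0 := Complex.exp_ne_zero _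
  -- the scalar identity
  have hsc2 : Complex.exp ((2*τ-1) * L1) *
        (qpow q (2*τ-1) ^ k1 * qpow q (2*τ-1) ^ (k2-k1)) *
        (-((Complex.exp L1 * (q:ℂ)^k1) * (Complex.exp L2 * (q:ℂ)^k2)))
      = -((Complex.exp (2*τ*L1) * qpow q (2*τ) ^ k1) *
            (Complex.exp (2*τ*L2) * qpow q (2*τ) ^ k2))
        * (Complex.exp ((2*τ-1) * L1) * Complex.exp ((1-2*τ) * L2))
        * (Complex.exp ((2*τ-1) * (-L1)) * qpow q (2*τ-1) ^ (-k1)) := by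
    rw [ekk, eq1, eq2, ← e2τ1, ← e2τ2, ← eexp1, ← eexp2, eexp3, emin, eneg]
    field_simp
  linear_combination (qtheta q ((q:ℂ) * (qpow q τ)⁻¹ * X) / qtheta q (qpow q τ * X)) *
    (poch q ((q:ℂ) * (qpow q τ)⁻¹ * (X⁻¹ * (q:ℂ)^(-(k2-k1)))) /
      poch q (qpow q τ * (X⁻¹ * (q:ℂ)^(-(k2-k1))))) *
    ((Complex.exp L1)⁻¹ * (q:ℂ)^(-k1) - (Complex.exp L2)⁻¹ * (q:ℂ)^(-k2)) * hsc2

end Part5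

section Part6

lemma swap_pairs {M : Type*} [CommMonoid M] (n : ℕ) (f : Fin n → M) :
    (∏ i : Fin n, ∏ j ∈ Finset.Ioi i, f j) = ∏ j : Fin n, (f j) ^ (j : ℕ) := by
  rw [Finset.prod_comm' (t' := Finset.univ) (s' := fun j => Finset.Iio j)
    (by intro x y; simp [Finset.mem_Ioi, Finset.mem_Iio, and_comm])]
  exact Finset.prod_congr rfl (fun j _ => by rw [Finset.prod_const, Fin.card_Iio])

lemma prod_g_cancel (n : ℕ) (g : Fin n → ℂ) (hg : ∀ i, g i ≠ 0) :
    (∏ i : Fin n, (g i)⁻¹ ^ (n-1)) * (∏ i : Fin n, ∏ j ∈ Finset.Ioi i, (g i * g j)) = 1 := by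
  have h1 : (∏ i : Fin n, ∏ j ∈ Finset.Ioi i, (g i * g j))
      = (∏ i : Fin n, (g i) ^ (n - 1 - (i:ℕ))) * (∏ i : Fin n, (g i) ^ (i:ℕ)) := by
    have e1 : ∀ i : Fin n, ∏ j ∈ Finset.Ioi i, (g i * g j)
        = (g i) ^ (n - 1 - (i:ℕ)) * ∏ j ∈ Finset.Ioi i, g j := by
      intro i
      rw [Finset.prod_mul_distrib, Finset.prod_const, Fin.card_Ioi]
    rw [Finset.prod_congr rfl (fun i _ => e1 i), Finset.prod_mul_distrib, swap_pairs]
  rw [h1, ← Finset.prod_mul_distrib, ← Finset.prod_mul_distrib]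
  have e2 : ∀ i : Fin n, (g i)⁻¹ ^ (n-1) * ((g i) ^ (n - 1 - (i:ℕ)) * (g i) ^ (i:ℕ)) = 1 := by
    intro i
    rw [← pow_add, show n - 1 - (i:ℕ) + (i:ℕ) = n - 1 by omega, inv_pow,
      inv_mul_cancel₀ (pow_ne_zero _ (hg i))]
  rw [Finset.prod_congr rfl (fun i _ => e2 i), Finset.prod_const_one]

lemma prod_pairs_const (n : ℕ) (c : ℂ) :
    (∏ i : Fin n, ∏ _j ∈ Finset.Ioi i, c) = c ^ (n.choose 2) := by
  have h1 : (∏ i : Fin n, ∏ _j ∈ Finset.Ioi i, c) = c ^ (∑ i : Fin n, (n - 1 - (i:ℕ))) := by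
    rw [← Finset.prod_pow_eq_pow_sum]
    exact Finset.prod_congr rfl (fun i _ => by rw [Finset.prod_const, Fin.card_Ioi])
  rw [h1]
  congr 1
  rw [Fin.sum_univ_eq_sum_range (fun i => n - 1 - i) n]
  rw [show (∑ i ∈ Finset.range n, (n - 1 - i)) = ∑ i ∈ Finset.range n, i from
    Finset.sum_range_reflect (fun i => i) n]
  rw [Finset.sum_range_id, Nat.choose_two_right]

end Part6

section Part7
variable {q : ℝ} (hq0 : 0 < q) (hq1 : q < 1)
include hq0 hq1

lemma poch_transfer (c X : ℂ) (h : ∀ μ : ℤ, poch q (c * (X * (q:ℂ)^μ)) ≠ 0) :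
    poch q ((q:ℂ) * c⁻¹ * X⁻¹) ≠ 0 := by
  have hq : (q:ℂ) ≠ 0 := by exact_mod_cast hq0.ne'
  apply poch_ne_zero hq0 hq1
  intro k hk
  rcases eq_or_ne c 0 with rfl | hc
  · simp at hk
  rcases eq_or_ne X 0 with rfl | hX
  · simp at hk
  apply h (-((k:ℤ)+1))
  apply poch_eq_zero hq0 hq1 (k := 0)
  rw [pow_zero, one_mul]
  have hqk : ((q:ℂ)^k) ≠ 0 := pow_ne_zero _ hq
  have hck : c * X = (q:ℂ)^(k+1) := by
    field_simp at hk
    rw [pow_succ]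
    linear_combination -hk
  rw [show (-((k:ℤ)+1)) = -(((k+1 : ℕ)):ℤ) by push_cast; ring, zpow_neg, zpow_natCast]
  rw [show c * (X * ((q:ℂ)^(k+1))⁻¹) = (c * X) * ((q:ℂ)^(k+1))⁻¹ by ring, hck]
  exact mul_inv_cancel₀ (pow_ne_zero _ hq)

end Part7


/-- Lemma 3.14: the reflective equation relating the A-type Jackson integral `I(x)` and its
dual `Ī(x⁻¹)`.  Here `a₁ = q^{α₁}`, `b₁ = q^{β₁}`, `s = 1-α₁-β₁-2(n-1)τ-α`, the dual summand
`Ψ̄_y(ν)` is `Apsi q n s τ b₁ a₁`, and the branch of `x i ⁻¹` is given by `-(l i)`. -/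
theorem statement12 (q : ℝ) (hq0 : 0 < q) (hq1 : q < 1) (n : ℕ) (hn : 1 ≤ n)
    (α τ α₁ β₁ : ℂ)
    (hconv : ∀ i : Fin n,
      ‖(q : ℂ) * (qpow q α₁)⁻¹ * (qpow q β₁)⁻¹‖ <
          ‖qpow q α * qpow q τ ^ (2 * (i : ℕ))‖ ∧
      ‖qpow q α * qpow q τ ^ (2 * (i : ℕ))‖ < 1)
    (l : Fin n → ℂ)
    (hwd : AWellDef q n τ (qpow q β₁) l)
    (hwd' : AWellDef q n τ (qpow q α₁) (fun i => -l i))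
    (hsum : Summable fun ν : Fin n → ℤ => Apsi q n α τ (qpow q α₁) (qpow q β₁) l ν)
    (hsum' : Summable fun ν : Fin n → ℤ =>
      Apsi q n (1 - α₁ - β₁ - 2 * ((n : ℂ) - 1) * τ - α) τ (qpow q β₁) (qpow q α₁)
        (fun i => -l i) ν) :
    AInt q n α τ (qpow q α₁) (qpow q β₁) l =
      (-1 : ℂ) ^ n.choose 2 *
        (∏ i : Fin n,
          Complex.exp ((1 - α₁ - β₁) * l i) *
            (qtheta q ((q : ℂ) * (qpow q α₁)⁻¹ * Complex.exp (l i)) /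
              qtheta q (qpow q β₁ * Complex.exp (l i)))) *
        (∏ j : Fin n, ∏ k ∈ Finset.Ioi j,
          Complex.exp ((2 * τ - 1) * l j) * Complex.exp ((1 - 2 * τ) * l k) *
            (qtheta q ((q : ℂ) * (qpow q τ)⁻¹ * Complex.exp (l k) / Complex.exp (l j)) /
              qtheta q (qpow q τ * Complex.exp (l k) / Complex.exp (l j)))) *
        AInt q n (1 - α₁ - β₁ - 2 * ((n : ℂ) - 1) * τ - α) τ (qpow q β₁) (qpow q α₁)
          (fun i => -l i) := by
  have hqc : (q:ℂ) ≠ 0 := by exact_mod_cast hq0.ne'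
  have hb1 : ∀ (i : Fin n) (μ : ℤ),
      poch q (qpow q β₁ * (Complex.exp (l i) * (q:ℂ)^μ)) ≠ 0 :=
    fun i μ => (hwd (fun _ => μ)).1 i
  have ha1 : ∀ (i : Fin n) (μ : ℤ),
      poch q (qpow q α₁ * ((Complex.exp (l i))⁻¹ * (q:ℂ)^μ)) ≠ 0 := by
    intro i μ
    have h := (hwd' (fun _ => μ)).1 i
    rwa [Complex.exp_neg] at h
  have hbp : ∀ (i j : Fin n), i < j → ∀ μ : ℤ,
      poch q (qpow q τ * (Complex.exp (l j) * (Complex.exp (l i))⁻¹ * (q:ℂ)^μ)) ≠ 0 := by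
    intro i j hij μ
    have h := (hwd (fun k => if k = j then μ else 0)).2 i j hij
    simp only [show (if j = j then μ else 0) = μ from if_pos rfl,
      show (if i = j then μ else 0) = (0:ℤ) from if_neg (Fin.ne_of_lt hij)] at h
    convert h using 2
    simp only [if_true, zpow_zero]
    ring
  have hap : ∀ (i j : Fin n), i < j → ∀ μ : ℤ,
      poch q (qpow q τ * ((Complex.exp (l j) * (Complex.exp (l i))⁻¹)⁻¹ * (q:ℂ)^μ)) ≠ 0 := by
    intro i j hij μ
    have h := (hwd' (fun k => if k = j then μ else 0)).2 i j hij
    simp only [show (if j = j then μ else 0) = μ from if_pos rfl,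
      show (if i = j then μ else 0) = (0:ℤ) from if_neg (Fin.ne_of_lt hij),
      Complex.exp_neg] at h
    convert h using 2
    simp only [if_true, zpow_zero]
    ring
  have key : ∀ ν : Fin n → ℤ,
      Apsi q n α τ (qpow q α₁) (qpow q β₁) l ν
        = ((-1 : ℂ) ^ n.choose 2 *
            (∏ i : Fin n,
              Complex.exp ((1 - α₁ - β₁) * l i) *
                (qtheta q ((q : ℂ) * (qpow q α₁)⁻¹ * Complex.exp (l i)) /
                  qtheta q (qpow q β₁ * Complex.exp (l i)))) *
            (∏ j : Fin n, ∏ k ∈ Finset.Ioi j,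
              Complex.exp ((2 * τ - 1) * l j) * Complex.exp ((1 - 2 * τ) * l k) *
                (qtheta q ((q : ℂ) * (qpow q τ)⁻¹ * Complex.exp (l k) / Complex.exp (l j)) /
                  qtheta q (qpow q τ * Complex.exp (l k) / Complex.exp (l j)))))
          * Apsi q n (1 - α₁ - β₁ - 2 * ((n : ℂ) - 1) * τ - α) τ (qpow q β₁) (qpow q α₁)
              (fun i => -l i) (-ν) := by
    intro ν
    have gc : (∏ i : Fin n, (Complex.exp (2*τ*l i) * qpow q (2*τ) ^ ν i)⁻¹ ^ (n-1)) *
        (∏ i : Fin n, ∏ j ∈ Finset.Ioi i,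
          (Complex.exp (2*τ*l i) * qpow q (2*τ) ^ ν i *
            (Complex.exp (2*τ*l j) * qpow q (2*τ) ^ ν j))) = 1 :=
      prod_g_cancel n (fun i => Complex.exp (2*τ*l i) * qpow q (2*τ) ^ ν i)
        (fun i => mul_ne_zero (Complex.exp_ne_zero _) (zpow_ne_zero _ (qpow_ne_zero _)))
    simp only [Apsi, Pi.neg_apply, Complex.exp_neg]
    have eA : ∀ i ∈ (Finset.univ : Finset (Fin n)),
        Complex.exp (α * l i) * qpow q α ^ ν i *
          (poch q ((q : ℂ) * (qpow q α₁)⁻¹ * (Complex.exp (l i) * (q : ℂ) ^ ν i)) /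
            poch q (qpow q β₁ * (Complex.exp (l i) * (q : ℂ) ^ ν i)))
        = (Complex.exp ((1 - α₁ - β₁) * l i) *
            (qtheta q ((q : ℂ) * (qpow q α₁)⁻¹ * Complex.exp (l i)) /
              qtheta q (qpow q β₁ * Complex.exp (l i))))
          * (((Complex.exp (2*τ*l i) * qpow q (2*τ) ^ ν i)⁻¹ ^ (n-1))
          * (Complex.exp ((1 - α₁ - β₁ - 2 * ((n : ℂ) - 1) * τ - α) * -l i) *
              qpow q (1 - α₁ - β₁ - 2 * ((n : ℂ) - 1) * τ - α) ^ (-ν i) *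
              (poch q ((q : ℂ) * (qpow q β₁)⁻¹ * ((Complex.exp (l i))⁻¹ * (q : ℂ) ^ (-ν i))) /
                poch q (qpow q α₁ * ((Complex.exp (l i))⁻¹ * (q : ℂ) ^ (-ν i)))))) := by
      intro i _
      have hv1 : poch q (qpow q β₁ * Complex.exp (l i)) ≠ 0 := by
        have h := hb1 i 0; rwa [zpow_zero, mul_one] at h
      have hv2 := poch_transfer hq0 hq1 (qpow q β₁) (Complex.exp (l i)) (hb1 i)
      rw [Ei hq0 hq1 n hn α τ α₁ β₁ (l i) (ν i) (hb1 i (ν i)) (ha1 i (-(ν i))) hv1 hv2]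
      ring
    rw [Finset.prod_congr rfl eA, mul_assoc, ← Finset.prod_mul_distrib]
    have eBC : ∀ i ∈ (Finset.univ : Finset (Fin n)),
        ((∏ j ∈ Finset.Ioi i,
            Complex.exp ((2 * τ - 1) * l i) * qpow q (2 * τ - 1) ^ ν i *
              (poch q (qpow q (1 - τ) *
                  (Complex.exp (l j) * (q : ℂ) ^ ν j / (Complex.exp (l i) * (q : ℂ) ^ ν i))) /
                poch q (qpow q τ *
                  (Complex.exp (l j) * (q : ℂ) ^ ν j / (Complex.exp (l i) * (q : ℂ) ^ ν i))))) *
          ∏ j ∈ Finset.Ioi i,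
            (Complex.exp (l i) * (q : ℂ) ^ ν i - Complex.exp (l j) * (q : ℂ) ^ ν j))
        = ∏ j ∈ Finset.Ioi i,
            ((-1 : ℂ) *
              (Complex.exp (2*τ*l i) * qpow q (2*τ) ^ ν i *
                (Complex.exp (2*τ*l j) * qpow q (2*τ) ^ ν j)) *
              (Complex.exp ((2 * τ - 1) * l i) * Complex.exp ((1 - 2 * τ) * l j) *
                (qtheta q ((q : ℂ) * (qpow q τ)⁻¹ * Complex.exp (l j) / Complex.exp (l i)) /
                  qtheta q (qpow q τ * Complex.exp (l j) / Complex.exp (l i)))) *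
              ((Complex.exp ((2 * τ - 1) * -l i) * qpow q (2 * τ - 1) ^ (-ν i) *
                (poch q (qpow q (1 - τ) *
                    ((Complex.exp (l j))⁻¹ * (q : ℂ) ^ (-ν j) /
                      ((Complex.exp (l i))⁻¹ * (q : ℂ) ^ (-ν i)))) /
                  poch q (qpow q τ *
                    ((Complex.exp (l j))⁻¹ * (q : ℂ) ^ (-ν j) /
                      ((Complex.exp (l i))⁻¹ * (q : ℂ) ^ (-ν i)))))) *
                ((Complex.exp (l i))⁻¹ * (q : ℂ) ^ (-ν i) -
                  (Complex.exp (l j))⁻¹ * (q : ℂ) ^ (-ν j)))) := by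
      intro i _
      rw [← Finset.prod_mul_distrib]
      refine Finset.prod_congr rfl fun j hj => ?_
      have hij : i < j := Finset.mem_Ioi.mp hj
      have hv1 : poch q (qpow q τ * (Complex.exp (l j) * (Complex.exp (l i))⁻¹)) ≠ 0 := by
        have h := hbp i j hij 0; rwa [zpow_zero, mul_one] at h
      have hv2 := poch_transfer hq0 hq1 (qpow q τ)
        (Complex.exp (l j) * (Complex.exp (l i))⁻¹) (hbp i j hij)
      rw [Eij hq0 hq1 τ (l i) (l j) (ν i) (ν j) (hbp i j hij (ν j - ν i))
        (hap i j hij (-(ν j - ν i))) hv1 hv2]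
      ring
    rw [Finset.prod_congr rfl eBC]
    simp only [Finset.prod_mul_distrib] at gc ⊢
    rw [prod_pairs_const n (-1 : ℂ)]
    linear_combination ((-1 : ℂ) ^ n.choose 2 *
        (∏ i : Fin n, Complex.exp ((1 - α₁ - β₁) * l i)) *
        (∏ i : Fin n, qtheta q ((q : ℂ) * (qpow q α₁)⁻¹ * Complex.exp (l i)) /
            qtheta q (qpow q β₁ * Complex.exp (l i))) *
        (∏ i : Fin n, ∏ j ∈ Finset.Ioi i, Complex.exp ((2 * τ - 1) * l i)) *
        (∏ i : Fin n, ∏ j ∈ Finset.Ioi i, Complex.exp ((1 - 2 * τ) * l j)) *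
        (∏ i : Fin n, ∏ j ∈ Finset.Ioi i,
            qtheta q ((q : ℂ) * (qpow q τ)⁻¹ * Complex.exp (l j) / Complex.exp (l i)) /
              qtheta q (qpow q τ * Complex.exp (l j) / Complex.exp (l i))) *
        (∏ i : Fin n, Complex.exp ((1 - α₁ - β₁ - 2 * ((n : ℂ) - 1) * τ - α) * -l i)) *
        (∏ i : Fin n, qpow q (1 - α₁ - β₁ - 2 * ((n : ℂ) - 1) * τ - α) ^ (-ν i)) *
        (∏ i : Fin n,
            poch q ((q : ℂ) * (qpow q β₁)⁻¹ * ((Complex.exp (l i))⁻¹ * (q : ℂ) ^ (-ν i))) /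
              poch q (qpow q α₁ * ((Complex.exp (l i))⁻¹ * (q : ℂ) ^ (-ν i)))) *
        (∏ i : Fin n, ∏ j ∈ Finset.Ioi i, Complex.exp ((2 * τ - 1) * -l i)) *
        (∏ i : Fin n, ∏ j ∈ Finset.Ioi i, qpow q (2 * τ - 1) ^ (-ν i)) *
        (∏ i : Fin n, ∏ j ∈ Finset.Ioi i,
            poch q (qpow q (1 - τ) *
                ((Complex.exp (l j))⁻¹ * (q : ℂ) ^ (-ν j) /
                  ((Complex.exp (l i))⁻¹ * (q : ℂ) ^ (-ν i)))) /
              poch q (qpow q τ *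
                ((Complex.exp (l j))⁻¹ * (q : ℂ) ^ (-ν j) /
                  ((Complex.exp (l i))⁻¹ * (q : ℂ) ^ (-ν i))))) *
        (∏ i : Fin n, ∏ j ∈ Finset.Ioi i,
            ((Complex.exp (l i))⁻¹ * (q : ℂ) ^ (-ν i) -
              (Complex.exp (l j))⁻¹ * (q : ℂ) ^ (-ν j)))) * gc
  rw [AInt, AInt, tsum_congr key, tsum_mul_left]
  rw [show (∑' ν : Fin n → ℤ,
        Apsi q n (1 - α₁ - β₁ - 2 * ((n : ℂ) - 1) * τ - α) τ (qpow q β₁) (qpow q α₁)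
          (fun i => -l i) (-ν))
      = ∑' ν : Fin n → ℤ,
        Apsi q n (1 - α₁ - β₁ - 2 * ((n : ℂ) - 1) * τ - α) τ (qpow q β₁) (qpow q α₁)
          (fun i => -l i) ν from
    Equiv.tsum_eq (Equiv.neg (Fin n → ℤ))
      (fun ν => Apsi q n (1 - α₁ - β₁ - 2 * ((n : ℂ) - 1) * τ - α) τ (qpow q β₁) (qpow q α₁)
        (fun i => -l i) ν)]
  ring
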